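/- Let (M_k) be a sequence of positive reals with M_0 = 1 and suppose there exist A ≥ 1 and H > 0 with M_{2k} ≤ A H^{2k} M_k^2 for all k ∈ ℕ (condition (M.2)). Define, for a fixed integer ν ≥ 1, the associated function 𝓜(r) = sup_{k ≥ 1} log(r^{νk} / M_{νk}) for r > 0 and 𝓜(0) = 0. Then for every L > 0 and every r ≥ 0, one has (1/2)·𝓜(L r) ≥ 𝓜(L̃ r) where L̃ = L / (√A · H), provided 𝓜(Lr) and 𝓜(L̃ r) are finite. -/
import Mathlib


/-- Halving property of the associated function under condition (M.2). -/
theorem stmt_1 (M : ℕ → ℝ) (hpos : ∀ k, 0 < M k) (h0 : M 0 = 1)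
    (A H : ℝ) (hA : 1 ≤ A) (hH : 0 < H)
    (hM2 : ∀ k : ℕ, M (2 * k) ≤ A * H ^ (2 * k) * (M k) ^ 2)
    (ν : ℕ) (hν : 1 ≤ ν)
    (MM : ℝ → ℝ) (hMM0 : MM 0 = 0)
    (hMM : ∀ r : ℝ, 0 < r →
      MM r = sSup {x : ℝ | ∃ k : ℕ, 1 ≤ k ∧ x = Real.log (r ^ (ν * k) / M (ν * k))}) :
    ∀ L : ℝ, 0 < L → ∀ r : ℝ, 0 ≤ r →
      BddAbove {x : ℝ | ∃ k : ℕ, 1 ≤ k ∧ x = Real.log ((L * r) ^ (ν * k) / M (ν * k))} →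
      BddAbove {x : ℝ | ∃ k : ℕ, 1 ≤ k ∧
        x = Real.log ((L / (Real.sqrt A * H) * r) ^ (ν * k) / M (ν * k))} →
      MM (L / (Real.sqrt A * H) * r) ≤ (1 / 2) * MM (L * r) := by
  intro L hL r hr hB1 hB2
  rcases hr.eq_or_lt with h | h
  · simp [← h, hMM0]
  have hA0 : (0:ℝ) < A := lt_of_lt_of_le one_pos hA
  have hsA : 0 < Real.sqrt A := Real.sqrt_pos.mpr hA0
  set t := L * r with htdef
  set s := L / (Real.sqrt A * H) * r with hsdef
  have ht : 0 < t := mul_pos hL h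
  have hs : 0 < s := mul_pos (div_pos hL (mul_pos hsA hH)) h
  rw [hMM s hs, hMM t ht]
  refine csSup_le ⟨Real.log (s ^ (ν * 1) / M (ν * 1)), 1, le_refl 1, rfl⟩ ?_
  rintro x ⟨k, hk, rfl⟩
  set n := ν * k with hndef
  have hn : 1 ≤ n := Nat.one_le_iff_ne_zero.mpr (by positivity)
  have hMn := hpos n
  have hM2n := hpos (2 * n)
  -- key: (s^n / M n)^2 ≤ t^(2n)/M(2n)
  have hsq : (s ^ n / M n) ^ 2 ≤ t ^ (2 * n) / M (2 * n) := by
    have hApow : A ≤ A ^ n := le_self_pow₀ hA (Nat.one_le_iff_ne_zero.mp hn)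
    have key : M (2 * n) ≤ A ^ n * H ^ (2 * n) * (M n) ^ 2 := by
      calc M (2 * n) ≤ A * H ^ (2 * n) * (M n) ^ 2 := hM2 n
        _ ≤ A ^ n * H ^ (2 * n) * (M n) ^ 2 := by
            gcongr
    have hspow : s ^ (2 * n) = t ^ (2 * n) / (A ^ n * H ^ (2 * n)) := by
      have h1 : s = t / (Real.sqrt A * H) := by
        rw [hsdef, htdef]; ring
      have h2 : (Real.sqrt A * H) ^ (2 * n) = A ^ n * H ^ (2 * n) := by
        rw [mul_pow]
        congr 1
        rw [pow_mul, Real.sq_sqrt hA0.le]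
      rw [h1, div_pow, h2]
    have hrw : (s ^ n / M n) ^ 2 = t ^ (2 * n) / (A ^ n * H ^ (2 * n) * (M n) ^ 2) := by
      rw [div_pow, ← pow_mul, mul_comm n 2, hspow]
      field_simp
    rw [hrw]
    apply div_le_div_of_nonneg_left (by positivity) hM2n key
  have hlog : Real.log (s ^ n / M n) ≤ 1 / 2 * Real.log (t ^ (2 * n) / M (2 * n)) := by
    have h2 : (2:ℝ) * Real.log (s ^ n / M n) ≤ Real.log (t ^ (2 * n) / M (2 * n)) := by
      have hpos1 : (0:ℝ) < (s ^ n / M n) ^ 2 := by positivity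
      have := Real.log_le_log hpos1 hsq
      rwa [Real.log_pow, Nat.cast_ofNat] at this
    linarith
  refine hlog.trans ?_
  have hmem : Real.log (t ^ (2 * n) / M (2 * n)) ∈
      {x : ℝ | ∃ k : ℕ, 1 ≤ k ∧ x = Real.log (t ^ (ν * k) / M (ν * k))} := by
    exact ⟨2 * k, by omega, by rw [hndef]; ring_nf⟩
  have := le_csSup hB1 hmem
  linarith
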